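/- Let G : ℝᵈ → Mat(d,d) be differentiable, symmetric positive-definite valued, and suppose the integrability condition ∂G_{km}/∂x_j = ∂G_{jm}/∂x_k holds for all j,k,m and all x. Then Ω(x) = Γ(x), where Ω_i(x) = |G|^{−1/2} Σ_j ∂_{x_j}[G⁻¹_{ij}|G|^{1/2}] and Γ_i(x) = (1/2) Σ_j ∂_{x_j} G⁻¹_{ij}(x). -/

import Mathlib

noncomputable def pd {d : ℕ} (f : (Fin d → ℝ) → ℝ) (x : Fin d → ℝ) (j : Fin d) : ℝ :=
  fderiv ℝ f x (Pi.single j 1)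

open Matrix Finset

lemma pd_congr {d : ℕ} {f g : (Fin d → ℝ) → ℝ} (h : ∀ y, f y = g y) (x : Fin d → ℝ) (j : Fin d) :
    pd f x j = pd g x j := by
  have : f = g := funext h
  rw [pd, pd, this]

lemma pd_const {d : ℕ} (c : ℝ) (x : Fin d → ℝ) (j : Fin d) : pd (fun _ => c) x j = 0 := by
  simp [pd]

lemma pd_mul {d : ℕ} {f g : (Fin d → ℝ) → ℝ} {x : Fin d → ℝ}
    (hf : DifferentiableAt ℝ f x) (hg : DifferentiableAt ℝ g x) (j : Fin d) :
    pd (fun y => f y * g y) x j = pd f x j * g x + f x * pd g x j := by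
  simp only [pd]
  rw [fderiv_fun_mul hf hg]
  simp only [ContinuousLinearMap.add_apply, ContinuousLinearMap.smul_apply, smul_eq_mul]
  ring

lemma pd_const_mul {d : ℕ} {f : (Fin d → ℝ) → ℝ} {x : Fin d → ℝ}
    (hf : DifferentiableAt ℝ f x) (c : ℝ) (j : Fin d) :
    pd (fun y => c * f y) x j = c * pd f x j := by
  simp only [pd]
  rw [fderiv_const_mul hf]
  simp

lemma pd_sum {d : ℕ} {ι : Type*} (u : Finset ι) {f : ι → (Fin d → ℝ) → ℝ} {x : Fin d → ℝ}
    (hf : ∀ i ∈ u, DifferentiableAt ℝ (f i) x) (j : Fin d) :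
    pd (fun y => ∑ i ∈ u, f i y) x j = ∑ i ∈ u, pd (f i) x j := by
  simp only [pd]
  rw [fderiv_fun_sum hf]
  simp

lemma pd_prod {d : ℕ} {ι : Type*} [DecidableEq ι] (u : Finset ι) {f : ι → (Fin d → ℝ) → ℝ}
    {x : Fin d → ℝ} (hf : ∀ i ∈ u, DifferentiableAt ℝ (f i) x) (j : Fin d) :
    pd (fun y => ∏ i ∈ u, f i y) x j
      = ∑ i ∈ u, (∏ k ∈ u.erase i, f k x) * pd (f i) x j := by
  simp only [pd]
  rw [fderiv_finset_prod hf]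
  simp

lemma pd_sqrt {d : ℕ} {f : (Fin d → ℝ) → ℝ} {x : Fin d → ℝ}
    (hf : DifferentiableAt ℝ f x) (hne : f x ≠ 0) (j : Fin d) :
    pd (fun y => Real.sqrt (f y)) x j = 1 / (2 * Real.sqrt (f x)) * pd f x j := by
  have h := (Real.hasDerivAt_sqrt hne).comp_hasFDerivAt x hf.hasFDerivAt
  have h2 : HasFDerivAt (fun y => Real.sqrt (f y))
      ((1 / (2 * Real.sqrt (f x))) • fderiv ℝ f x) x := h
  simp only [pd, h2.fderiv]
  simp

lemma diffAt_prod {d : ℕ} {ι : Type*} [DecidableEq ι] {u : Finset ι}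
    {f : ι → (Fin d → ℝ) → ℝ} {x : Fin d → ℝ}
    (hf : ∀ i ∈ u, DifferentiableAt ℝ (f i) x) :
    DifferentiableAt ℝ (fun y => ∏ i ∈ u, f i y) x :=
  (HasFDerivAt.finset_prod (fun i hi => (hf i hi).hasFDerivAt)).differentiableAt

lemma diff_det {d : ℕ} {M : (Fin d → ℝ) → Matrix (Fin d) (Fin d) ℝ}
    (hM : ∀ a b, Differentiable ℝ (fun y => M y a b)) :
    Differentiable ℝ (fun y => (M y).det) := by
  have h : (fun y => (M y).det)
      = fun y => ∑ σ : Equiv.Perm (Fin d), ((Equiv.Perm.sign σ : ℤ) : ℝ) * ∏ i, M y (σ i) i := by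
    funext y; rw [Matrix.det_apply']
  rw [h]
  refine Differentiable.fun_sum fun σ _ => Differentiable.const_mul (fun y => ?_) _
  exact (HasFDerivAt.finset_prod (fun i _ => ((hM (σ i) i) y).hasFDerivAt)).differentiableAt

section Main

variable {d : ℕ} {G : (Fin d → ℝ) → Matrix (Fin d) (Fin d) ℝ}

lemma diff_adj (hGdiff : ∀ i j, Differentiable ℝ (fun x => G x i j)) (a b : Fin d) :
    Differentiable ℝ (fun y => (G y).adjugate a b) := by
  have h : (fun y => (G y).adjugate a b)
      = fun y => ((G y).updateRow b (Pi.single a 1)).det := by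
    funext y; rw [Matrix.adjugate_apply]
  rw [h]
  apply diff_det
  intro c e
  by_cases hc : c = b
  · simp [Matrix.updateRow_apply, hc]
  · simp only [Matrix.updateRow_apply, hc, if_false]
    exact hGdiff c e

lemma inv_entry_eq (a b : Fin d) (y : Fin d → ℝ) :
    (G y)⁻¹ a b = ((G y).det)⁻¹ * (G y).adjugate a b := by
  rw [Matrix.inv_def, Matrix.smul_apply, Ring.inverse_eq_inv', smul_eq_mul]

lemma diff_inv_entry (hGdiff : ∀ i j, Differentiable ℝ (fun x => G x i j))
    (hdet : ∀ y, (G y).det ≠ 0) (a b : Fin d) :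
    Differentiable ℝ (fun y => (G y)⁻¹ a b) := by
  have h : (fun y => (G y)⁻¹ a b) = fun y => ((G y).det)⁻¹ * (G y).adjugate a b :=
    funext (inv_entry_eq a b)
  rw [h]
  exact ((diff_det hGdiff).inv hdet).mul (diff_adj hGdiff a b)

lemma det_updateColumn_expand (A : Matrix (Fin d) (Fin d) ℝ) (k : Fin d) (v : Fin d → ℝ)
    (σ : Equiv.Perm (Fin d)) :
    (∏ i, A.updateCol k v (σ i) i) = v (σ k) * ∏ i ∈ Finset.univ.erase k, A (σ i) i := by
  rw [← Finset.mul_prod_erase Finset.univ (fun i => A.updateCol k v (σ i) i)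
    (Finset.mem_univ k)]
  congr 1
  · rw [Matrix.updateCol_apply, if_pos rfl]
  · exact Finset.prod_congr rfl fun i hi => by
      rw [Matrix.updateCol_apply, if_neg (Finset.ne_of_mem_erase hi)]

lemma jacobi (hGdiff : ∀ i j, Differentiable ℝ (fun x => G x i j)) (x : Fin d → ℝ) (j : Fin d) :
    pd (fun y => (G y).det) x j
      = ∑ k, ∑ a, (G x).adjugate k a * pd (fun y => G y a k) x j := by
  classical
  have h1 : pd (fun y => (G y).det) x j
      = pd (fun y => ∑ σ : Equiv.Perm (Fin d),
          ((Equiv.Perm.sign σ : ℤ) : ℝ) * ∏ i, G y (σ i) i) x j :=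
    pd_congr (fun y => Matrix.det_apply' (G y)) x j
  rw [h1, pd_sum _ (fun σ _ => ((diffAt_prod (fun i _ => (hGdiff (σ i) i) x)).const_mul _)) j]
  have h2 : ∀ σ : Equiv.Perm (Fin d),
      pd (fun y => ((Equiv.Perm.sign σ : ℤ) : ℝ) * ∏ i, G y (σ i) i) x j
        = ((Equiv.Perm.sign σ : ℤ) : ℝ) *
            ∑ k, (∏ i ∈ Finset.univ.erase k, G x (σ i) i) * pd (fun y => G y (σ k) k) x j := by
    intro σ
    rw [pd_const_mul (diffAt_prod (fun i _ => (hGdiff (σ i) i) x)) _ j,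
      pd_prod _ (fun i _ => (hGdiff (σ i) i) x) j]
  simp_rw [h2, Finset.mul_sum]
  rw [Finset.sum_comm]
  refine Finset.sum_congr rfl fun k _ => ?_
  have h5 : ((G x).updateCol k fun a => pd (fun y => G y a k) x j).det
      = ∑ a, (G x).adjugate k a * pd (fun y => G y a k) x j := by
    rw [← Matrix.cramer_apply, Matrix.cramer_eq_adjugate_mulVec]
    simp [Matrix.mulVec, dotProduct]
  rw [← h5, Matrix.det_apply']
  refine Finset.sum_congr rfl fun σ _ => ?_
  rw [det_updateColumn_expand]
  ring

lemma pd_inv_formula (hGdiff : ∀ i j, Differentiable ℝ (fun x => G x i j))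
    (hdet : ∀ y, (G y).det ≠ 0) (x : Fin d → ℝ) (j a b : Fin d) :
    pd (fun y => (G y)⁻¹ a b) x j
      = -∑ c, (∑ e, (G x)⁻¹ a e * pd (fun y => G y e c) x j) * (G x)⁻¹ c b := by
  classical
  have hu : ∀ y, IsUnit (G y).det := fun y => isUnit_iff_ne_zero.mpr (hdet y)
  have hdiffinv : ∀ a b, Differentiable ℝ (fun y => (G y)⁻¹ a b) :=
    diff_inv_entry hGdiff hdet
  -- differentiate the identity G⁻¹ * G = 1 entrywise
  have hzero : ∀ c, ∑ e, (pd (fun y => (G y)⁻¹ a e) x j * G x e c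
      + (G x)⁻¹ a e * pd (fun y => G y e c) x j) = 0 := by
    intro c
    have e1 : ∑ e, (pd (fun y => (G y)⁻¹ a e) x j * G x e c
        + (G x)⁻¹ a e * pd (fun y => G y e c) x j)
        = pd (fun y => ∑ e, (G y)⁻¹ a e * G y e c) x j := by
      rw [pd_sum (f := fun e y => (G y)⁻¹ a e * G y e c) _ (fun e _ => ((hdiffinv a e) x).mul ((hGdiff e c) x)) j]
      exact Finset.sum_congr rfl fun e _ =>
        (pd_mul ((hdiffinv a e) x) ((hGdiff e c) x) j).symm
    have e2 : pd (fun y => ∑ e, (G y)⁻¹ a e * G y e c) x j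
        = pd (fun _ => (1 : Matrix (Fin d) (Fin d) ℝ) a c) x j :=
      pd_congr (fun y => by
        rw [← Matrix.mul_apply, Matrix.nonsing_inv_mul _ (hu y)]) x j
    rw [e1, e2, pd_const]
  have hPA : ∀ c, ∑ e, pd (fun y => (G y)⁻¹ a e) x j * G x e c
      = -∑ e, (G x)⁻¹ a e * pd (fun y => G y e c) x j := by
    intro c
    have := hzero c
    rw [Finset.sum_add_distrib] at this
    linarith
  -- multiply by G⁻¹ on the right
  have key : pd (fun y => (G y)⁻¹ a b) x j
      = ∑ c, (∑ e, pd (fun y => (G y)⁻¹ a e) x j * G x e c) * (G x)⁻¹ c b := by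
    simp_rw [Finset.sum_mul, mul_assoc]
    rw [Finset.sum_comm]
    have : ∀ e, ∑ c, pd (fun y => (G y)⁻¹ a e) x j * (G x e c * (G x)⁻¹ c b)
        = pd (fun y => (G y)⁻¹ a e) x j * (1 : Matrix (Fin d) (Fin d) ℝ) e b := by
      intro e
      rw [← Finset.mul_sum, ← Matrix.mul_apply, Matrix.mul_nonsing_inv _ (hu x)]
    simp_rw [this, Matrix.one_apply, mul_ite, mul_one, mul_zero]
    simp
  rw [key]
  simp_rw [hPA]
  rw [← Finset.sum_neg_distrib]
  exact Finset.sum_congr rfl fun c _ => by ring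

lemma triple_swap (f : Fin d → Fin d → Fin d → ℝ) :
    ∑ j, ∑ c, ∑ e, f j c e = ∑ e, ∑ c, ∑ j, f j c e := by
  calc ∑ j, ∑ c, ∑ e, f j c e
      = ∑ c, ∑ j, ∑ e, f j c e := Finset.sum_comm
    _ = ∑ c, ∑ e, ∑ j, f j c e := Finset.sum_congr rfl fun c _ => Finset.sum_comm
    _ = ∑ e, ∑ c, ∑ j, f j c e := Finset.sum_comm

end Main


/-- Under the integrability condition `∂ⱼGₖₘ = ∂ₖGⱼₘ`, the terms
`Ω` and `Γ` coincide. -/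
theorem stmt7 {d : ℕ} (G : (Fin d → ℝ) → Matrix (Fin d) (Fin d) ℝ)
    (hGdiff : ∀ i j, Differentiable ℝ (fun x => G x i j))
    (hGpd : ∀ x, (G x).PosDef)
    (hint : ∀ (j k m : Fin d) (x : Fin d → ℝ),
      pd (fun y => G y k m) x j = pd (fun y => G y j m) x k) :
    ∀ (i : Fin d) (x : Fin d → ℝ),
      (Real.sqrt (G x).det)⁻¹ *
          ∑ j, pd (fun y => (G y)⁻¹ i j * Real.sqrt (G y).det) x j =
        (1 / 2) * ∑ j, pd (fun y => (G y)⁻¹ i j) x j := by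
  intro i x
  classical
  have hdet : ∀ y, (G y).det ≠ 0 := fun y => (hGpd y).det_pos.ne'
  have hdiffdet := diff_det (M := G) hGdiff
  have hdiffinv := diff_inv_entry (G := G) hGdiff hdet
  have hs : 0 < Real.sqrt (G x).det := Real.sqrt_pos.mpr (hGpd x).det_pos
  have hsne : Real.sqrt (G x).det ≠ 0 := hs.ne'
  have hs2 : Real.sqrt (G x).det ^ 2 = (G x).det := Real.sq_sqrt (hGpd x).det_pos.le
  have hdsq : DifferentiableAt ℝ (fun y => Real.sqrt (G y).det) x :=
    ((Real.hasDerivAt_sqrt (hdet x)).comp_hasFDerivAt x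
      (hdiffdet x).hasFDerivAt).differentiableAt
  have hadj : ∀ k a, (G x).adjugate k a = (G x).det * (G x)⁻¹ k a := by
    intro k a
    rw [inv_entry_eq k a x]
    exact (mul_inv_cancel_left₀ (hdet x) _).symm
  -- Jacobi with adjugate replaced by det • inverse
  have step2 : ∀ j : Fin d, pd (fun y => (G y).det) x j
      = (G x).det * ∑ k, ∑ a, (G x)⁻¹ k a * pd (fun y => G y a k) x j := by
    intro j
    rw [jacobi hGdiff x j, Finset.mul_sum]
    refine Finset.sum_congr rfl fun k _ => ?_
    rw [Finset.mul_sum]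
    refine Finset.sum_congr rfl fun a _ => ?_
    rw [hadj]
    ring
  -- expand each product derivative
  have step1 : ∀ j : Fin d, pd (fun y => (G y)⁻¹ i j * Real.sqrt (G y).det) x j
      = (pd (fun y => (G y)⁻¹ i j) x j
          + (1 / 2) * ((G x)⁻¹ i j * ∑ k, ∑ a, (G x)⁻¹ k a * pd (fun y => G y a k) x j))
        * Real.sqrt (G x).det := by
    intro j
    rw [pd_mul (hdiffinv i j x) hdsq j, pd_sqrt (hdiffdet x) (hdet x) j, step2 j, ← hs2]
    field_simp
    rw [Real.sq_sqrt (sq_nonneg (Real.sqrt (G x).det))]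
    ring
  -- the key cancellation identity
  have key : ∑ j, pd (fun y => (G y)⁻¹ i j) x j
      = -∑ j, (G x)⁻¹ i j * ∑ k, ∑ a, (G x)⁻¹ k a * pd (fun y => G y a k) x j := by
    have e1 : ∀ j : Fin d, pd (fun y => (G y)⁻¹ i j) x j
        = -∑ c, ∑ e, (G x)⁻¹ i e * pd (fun y => G y j c) x e * (G x)⁻¹ c j := by
      intro j
      rw [pd_inv_formula hGdiff hdet x j i j]
      congr 1
      refine Finset.sum_congr rfl fun c _ => ?_
      rw [Finset.sum_mul]
      refine Finset.sum_congr rfl fun e _ => ?_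
      rw [hint j e c x]
    simp_rw [e1]
    rw [Finset.sum_neg_distrib, neg_inj]
    calc ∑ j, ∑ c, ∑ e, (G x)⁻¹ i e * pd (fun y => G y j c) x e * (G x)⁻¹ c j
        = ∑ e, ∑ c, ∑ j, (G x)⁻¹ i e * pd (fun y => G y j c) x e * (G x)⁻¹ c j :=
          triple_swap _
      _ = ∑ j, (G x)⁻¹ i j * ∑ k, ∑ a, (G x)⁻¹ k a * pd (fun y => G y a k) x j := by
          refine Finset.sum_congr rfl fun e _ => ?_
          rw [Finset.mul_sum]
          refine Finset.sum_congr rfl fun c _ => ?_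
          rw [Finset.mul_sum]
          refine Finset.sum_congr rfl fun j _ => ?_
          ring
  -- assemble
  simp_rw [step1]
  rw [← Finset.sum_mul, Finset.sum_add_distrib, ← Finset.mul_sum]
  rw [key]
  field_simp
  ring
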